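/- The map 𝒵 ↦ ⋃_{Z ∈ 𝒵} Z is a bijection from the set of cliques of the full cooperation graph onto the power set P(M); in particular, for every A ⊆ M there is exactly one clique 𝒵 of the full cooperation graph with ⋃_{Z ∈ 𝒵} Z = A. -/

import Mathlib

open Finset

variable {V : Type*} [Fintype V] [DecidableEq V]

/-- The total coverage zone `C^T(X) = ⋃_{x ∈ X} C_x`. -/
def totCov (C : V → Finset V) (X : Finset V) : Finset V := X.biUnion C

/-- `Z ∈ 𝐙`: a cluster is a non-empty set every non-empty proper subset of which
interferes with its complement in the cluster. -/
def IsCluster (C : V → Finset V) (Z : Finset V) : Prop :=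
  Z.Nonempty ∧ ∀ z ⊆ Z, z.Nonempty → z ≠ Z →
    (totCov C z ∩ totCov C (Z \ z)).Nonempty

/-- The full cooperation graph: distinct clusters are adjacent iff their total
coverage zones are disjoint. -/
def fullCoopGraph (C : V → Finset V) : SimpleGraph {Z : Finset V // IsCluster C Z} :=
  SimpleGraph.fromRel fun Z Z' => Disjoint (totCov C Z.1) (totCov C Z'.1)

namespace Stmt9Aux

variable (C : V → Finset V) (A : Finset V)

/-- The step relation: both devices lie in `A` and their zones intersect. -/
def cstep (i j : V) : Prop := i ∈ A ∧ j ∈ A ∧ (C i ∩ C j).Nonempty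

theorem cstep_symm {i j : V} (h : cstep C A i j) : cstep C A j i := by
  obtain ⟨h1, h2, c, hc⟩ := h
  rw [Finset.mem_inter] at hc
  exact ⟨h2, h1, c, Finset.mem_inter.2 ⟨hc.2, hc.1⟩⟩

/-- The connected component of `i` in the interference graph on `A`. -/
noncomputable def comp (i : V) : Finset V :=
  @Finset.filter _ (fun j => Relation.ReflTransGen (cstep C A) i j) (Classical.decPred _) A

theorem mem_comp {i j : V} :
    j ∈ comp C A i ↔ j ∈ A ∧ Relation.ReflTransGen (cstep C A) i j := by
  simp [comp, Finset.mem_filter]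

theorem reach_symm {i j : V} (h : Relation.ReflTransGen (cstep C A) i j) :
    Relation.ReflTransGen (cstep C A) j i :=
  (@Relation.ReflTransGen.stdSymm _ (cstep C A) ⟨fun _ _ h => cstep_symm C A h⟩).symm _ _ h

theorem comp_eq {i j : V} (hj : j ∈ comp C A i) : comp C A j = comp C A i := by
  obtain ⟨hjA, hij⟩ := (mem_comp C A).1 hj
  ext k
  simp only [mem_comp]
  constructor
  · rintro ⟨hk, h⟩; exact ⟨hk, hij.trans h⟩
  · rintro ⟨hk, h⟩; exact ⟨hk, (reach_symm C A hij).trans h⟩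

theorem crossing {z : Finset V} {a b : V} (h : Relation.ReflTransGen (cstep C A) a b) :
    a ∈ z → b ∉ z →
    ∃ x y, x ∈ z ∧ y ∉ z ∧ cstep C A x y ∧ Relation.ReflTransGen (cstep C A) a y := by
  induction h with
  | refl => intro ha hb; exact absurd ha hb
  | @tail c d hac hcd ih =>
    intro ha hb
    by_cases hc : c ∈ z
    · exact ⟨c, d, hc, hb, hcd, hac.tail hcd⟩
    · exact ih ha hc

theorem isCluster_comp {i : V} (hi : i ∈ A) : IsCluster C (comp C A i) := by
  have hii : i ∈ comp C A i := (mem_comp C A).2 ⟨hi, .refl⟩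
  refine ⟨⟨i, hii⟩, ?_⟩
  intro z hz hzne hne
  obtain ⟨a, haz⟩ := hzne
  obtain ⟨b, hbc, hbz⟩ := Finset.exists_of_ssubset (lt_of_le_of_ne hz hne)
  have hac := (mem_comp C A).1 (hz haz)
  have hbc' := (mem_comp C A).1 hbc
  have hab : Relation.ReflTransGen (cstep C A) a b := (reach_symm C A hac.2).trans hbc'.2
  obtain ⟨x, y, hx, hyz, hstep, hay⟩ := crossing C A hab haz hbz
  have hy : y ∈ comp C A i := (mem_comp C A).2 ⟨hstep.2.1, hac.2.trans hay⟩
  obtain ⟨c, hc⟩ := hstep.2.2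
  rw [Finset.mem_inter] at hc
  refine ⟨c, Finset.mem_inter.2 ⟨?_, ?_⟩⟩
  · exact Finset.mem_biUnion.2 ⟨x, hx, hc.1⟩
  · exact Finset.mem_biUnion.2 ⟨y, Finset.mem_sdiff.2 ⟨hy, hyz⟩, hc.2⟩

theorem disjoint_comp {i j : V} (h : comp C A i ≠ comp C A j) :
    Disjoint (totCov C (comp C A i)) (totCov C (comp C A j)) := by
  rw [Finset.disjoint_left]
  intro c hci hcj
  obtain ⟨x, hx, hcx⟩ := Finset.mem_biUnion.1 hci
  obtain ⟨y, hy, hcy⟩ := Finset.mem_biUnion.1 hcj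
  have hstep : cstep C A x y :=
    ⟨((mem_comp C A).1 hx).1, ((mem_comp C A).1 hy).1, c, Finset.mem_inter.2 ⟨hcx, hcy⟩⟩
  have hyi : y ∈ comp C A i := (mem_comp C A).2 ⟨hstep.2.1, ((mem_comp C A).1 hx).2.tail hstep⟩
  exact h ((comp_eq C A hyi).symm.trans (comp_eq C A hy))

/-- The canonical clique: all components of elements of `A`. -/
noncomputable def canon : Finset {Z : Finset V // IsCluster C Z} :=
  A.attach.image fun i => ⟨comp C A i.1, isCluster_comp C A i.2⟩

theorem union_canon : (canon C A).biUnion Subtype.val = A := by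
  ext x
  simp only [canon, Finset.mem_biUnion, Finset.mem_image, Finset.mem_attach, true_and]
  constructor
  · rintro ⟨Z, ⟨i, rfl⟩, hx⟩
    exact ((mem_comp C A).1 hx).1
  · intro hx
    exact ⟨⟨comp C A x, isCluster_comp C A hx⟩, ⟨⟨x, hx⟩, rfl⟩, (mem_comp C A).2 ⟨hx, .refl⟩⟩

theorem isClique_canon : (fullCoopGraph C).IsClique ↑(canon C A) := by
  intro Z hZ Z' hZ' hne
  simp only [canon, Finset.coe_image, Set.mem_image, Finset.mem_coe, Finset.mem_attach,
    Set.mem_univ, true_and] at hZ hZ'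
  obtain ⟨i, rfl⟩ := hZ
  obtain ⟨j, rfl⟩ := hZ'
  simp only [fullCoopGraph, SimpleGraph.fromRel_adj]
  refine ⟨hne, Or.inl (disjoint_comp C A ?_)⟩
  intro h
  exact hne (Subtype.ext h)

theorem clique_char (𝒵 : Finset {Z : Finset V // IsCluster C Z})
    (hcl : (fullCoopGraph C).IsClique ↑𝒵) (hU : 𝒵.biUnion Subtype.val = A)
    {Z : {Z : Finset V // IsCluster C Z}} (hZ : Z ∈ 𝒵) {i : V} (hi : i ∈ Z.1) :
    Z.1 = comp C A i := by
  classical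
  have hsub : ∀ x ∈ Z.1, x ∈ A := fun x hx => hU ▸ Finset.mem_biUnion.2 ⟨Z, hZ, hx⟩
  have hclosed : ∀ x ∈ Z.1, ∀ y, cstep C A x y → y ∈ Z.1 := by
    intro x hx y hstep
    have hyA : y ∈ A := hstep.2.1
    have : y ∈ 𝒵.biUnion Subtype.val := hU.symm ▸ hyA
    obtain ⟨Z', hZ', hyZ'⟩ := Finset.mem_biUnion.1 this
    by_cases hee : Z' = Z
    · exact hee ▸ hyZ'
    · have hadj := hcl hZ hZ' (fun h => hee h.symm)
      simp only [fullCoopGraph, SimpleGraph.fromRel_adj] at hadj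
      obtain ⟨c, hc⟩ := hstep.2.2
      rw [Finset.mem_inter] at hc
      have h1 : c ∈ totCov C Z.1 := Finset.mem_biUnion.2 ⟨x, hx, hc.1⟩
      have h2 : c ∈ totCov C Z'.1 := Finset.mem_biUnion.2 ⟨y, hyZ', hc.2⟩
      rcases hadj.2 with hd | hd
      · exact absurd h2 (Finset.disjoint_left.1 hd h1)
      · exact absurd h1 (Finset.disjoint_left.1 hd h2)
  apply Finset.Subset.antisymm
  · -- Z ⊆ comp i, via the cluster property of Z
    intro j hjZ
    set z := @Finset.filter _ (fun k => Relation.ReflTransGen (cstep C A) i k)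
      (Classical.decPred _) Z.1 with hzdef
    have hzZ : z = Z.1 := by
      by_contra hne
      obtain ⟨c, hc⟩ := Z.2.2 z (Finset.filter_subset _ _)
        ⟨i, Finset.mem_filter.2 ⟨hi, .refl⟩⟩ hne
      rw [Finset.mem_inter] at hc
      obtain ⟨x, hxz, hcx⟩ := Finset.mem_biUnion.1 hc.1
      obtain ⟨y, hy, hcy⟩ := Finset.mem_biUnion.1 hc.2
      rw [Finset.mem_sdiff] at hy
      have hxmem := Finset.mem_filter.1 hxz
      have hstep : cstep C A x y :=
        ⟨hsub x hxmem.1, hsub y hy.1, c, Finset.mem_inter.2 ⟨hcx, hcy⟩⟩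
      exact hy.2 (Finset.mem_filter.2 ⟨hy.1, hxmem.2.tail hstep⟩)
    have hjz : j ∈ z := hzZ ▸ hjZ
    exact (mem_comp C A).2 ⟨hsub j hjZ, (Finset.mem_filter.1 hjz).2⟩
  · -- comp i ⊆ Z, via closedness
    intro j hj
    obtain ⟨hjA, hij⟩ := (mem_comp C A).1 hj
    clear hj
    induction hij with
    | refl => exact hi
    | tail hik hstep ih => exact hclosed _ (ih hstep.1) _ hstep

theorem clique_eq_canon (𝒵 : Finset {Z : Finset V // IsCluster C Z})
    (hcl : (fullCoopGraph C).IsClique ↑𝒵) (hU : 𝒵.biUnion Subtype.val = A) :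
    𝒵 = canon C A := by
  ext Z
  simp only [canon, Finset.mem_image, Finset.mem_attach, true_and]
  constructor
  · intro hZ
    obtain ⟨i, hi⟩ := Z.2.1
    have hiA : i ∈ A := hU ▸ Finset.mem_biUnion.2 ⟨Z, hZ, hi⟩
    exact ⟨⟨i, hiA⟩, Subtype.ext (clique_char C A 𝒵 hcl hU hZ hi).symm⟩
  · rintro ⟨⟨i, hiA⟩, rfl⟩
    have : i ∈ 𝒵.biUnion Subtype.val := hU.symm ▸ hiA
    obtain ⟨Z', hZ', hiZ'⟩ := Finset.mem_biUnion.1 this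
    have heq : Z' = ⟨comp C A i, isCluster_comp C A hiA⟩ :=
      Subtype.ext (clique_char C A 𝒵 hcl hU hZ' hiZ')
    exact heq ▸ hZ'

end Stmt9Aux

theorem stmt9 (C : V → Finset V) (hC : ∀ i, i ∈ C i) :
    -- the union map is a bijection from the cliques of the full cooperation graph
    -- onto the power set of the device set
    Set.BijOn (fun Zc : Finset {Z : Finset V // IsCluster C Z} => Zc.biUnion Subtype.val)
      {Zc | (fullCoopGraph C).IsClique ↑Zc} Set.univ ∧
    -- in particular every `A` is the union of exactly one clique
    (∀ A : Finset V, ∃! Zc : Finset {Z : Finset V // IsCluster C Z},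
      (fullCoopGraph C).IsClique ↑Zc ∧ Zc.biUnion Subtype.val = A) := by
  constructor
  · refine ⟨fun _ _ => Set.mem_univ _, ?_, ?_⟩
    · intro X hX Y hY hXY
      simp only [Set.mem_setOf_eq] at hX hY
      have hXY' : X.biUnion Subtype.val = Y.biUnion Subtype.val := hXY
      have h1 := Stmt9Aux.clique_eq_canon C (X.biUnion Subtype.val) X hX rfl
      have h2 := Stmt9Aux.clique_eq_canon C (X.biUnion Subtype.val) Y hY hXY'.symm
      exact h1.trans h2.symm
    · intro A _
      exact ⟨Stmt9Aux.canon C A, Stmt9Aux.isClique_canon C A, Stmt9Aux.union_canon C A⟩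
  · intro A
    exact ⟨Stmt9Aux.canon C A, ⟨Stmt9Aux.isClique_canon C A, Stmt9Aux.union_canon C A⟩,
      fun 𝒵 h => Stmt9Aux.clique_eq_canon C A 𝒵 h.1 h.2⟩
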